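/- arXiv:math/0301073 — 4 statements merged into one kernel-verified Lean document; each statement's English description precedes it below -/
import Mathlib

section
/- Let n ≥ 1, let V ⊆ ℝ^{2n} be open, and let Z ⊂ V be nonempty and compact. Then c_HZ(V,Z) = inf{C > 0 : every smooth H : ℝ^{2n} → ℝ whose support is a compact subset of V and which satisfies min_Z H > C has a fast periodic orbit}, with the convention that the infimum of the empty set is +∞. -/
open scoped RealInnerProductSpace ENNReal NNReal Topology
open Metric Set

noncomputable section

/-- `ℝ^{2n}` identified with `ℂ^n`, with the standard (real) inner product and
the standard complex structure `J` given by multiplication by `i`. -/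
abbrev Esp (n : ℕ) := EuclideanSpace ℂ (Fin n)

variable {n : ℕ}

/-- The Hamiltonian vector field `X_H = J ∇H` of `H : ℝ^{2n} → ℝ`. -/
def hamVF (H : Esp n → ℝ) (x : Esp n) : Esp n := Complex.I • gradient H x

/-- A nonconstant `T`-periodic orbit of the Hamiltonian flow of `H`:
a nonconstant solution `γ` of `γ' = J∇H(γ)` with `γ (t + T) = γ t`. -/
def IsPeriodicOrbit (H : Esp n → ℝ) (γ : ℝ → Esp n) (T : ℝ) : Prop :=
  0 < T ∧ (∀ t, HasDerivAt γ (hamVF H (γ t)) t) ∧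
    (∀ t, γ (t + T) = γ t) ∧ ∃ t₀ t₁, γ t₀ ≠ γ t₁

/-- `H` has a fast (period `≤ 1`) nonconstant periodic orbit. -/
def HasFastOrbit (H : Esp n → ℝ) : Prop :=
  ∃ γ T, IsPeriodicOrbit H γ T ∧ T ≤ 1

/-- The symplectic action of a `1`-periodic loop `γ` with respect to the
(possibly time-dependent) Hamiltonian `H`:
`A_H(γ) = -(1/2)∫₀¹ ⟨Jγ(t), γ'(t)⟩ dt + ∫₀¹ H(t, γ(t)) dt`. -/
def action (H : ℝ → Esp n → ℝ) (γ : ℝ → Esp n) : ℝ :=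
  -(1 / 2) * (∫ t in (0:ℝ)..1, ⟪(Complex.I • γ t : Esp n), deriv γ t⟫) +
    ∫ t in (0:ℝ)..1, H t (γ t)

/-- The class `𝓗(V, Z)`: smooth functions on `ℝ^{2n}` with compact support
contained in `V`, constant on a neighborhood of `Z`, whose value on `Z` is the
maximum of `H`. -/
def InHclass (V Z : Set (Esp n)) (H : Esp n → ℝ) : Prop :=
  ContDiff ℝ (⊤ : ℕ∞) H ∧ IsCompact (tsupport H) ∧ tsupport H ⊆ V ∧
    (∃ U, IsOpen U ∧ Z ⊆ U ∧ ∃ c : ℝ, ∀ x ∈ U, H x = c) ∧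
    ∀ z ∈ Z, ∀ x, H x ≤ H z

/-- The relative Hofer–Zehnder capacity `c_HZ(V, Z)`: the supremum of `max H`
over all `H ∈ 𝓗(V, Z)` having no fast nonconstant periodic orbit (for `z ∈ Z`,
`H z = max H`). -/
def relCap (V Z : Set (Esp n)) : ℝ≥0∞ :=
  sSup {c | ∃ H, InHclass V Z H ∧ ¬ HasFastOrbit H ∧
    ∃ z ∈ Z, c = ENNReal.ofReal (H z)}

lemma inner_I_self (v : Esp n) : ⟪v, (Complex.I • v : Esp n)⟫ = 0 := by
  simp only [PiLp.inner_apply]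
  exact Finset.sum_eq_zero fun i _ => by
    simp [Complex.smul_re, Complex.smul_im]
    ring

lemma hasGradientAt_comp (f : ℝ → ℝ) (H : Esp n → ℝ) (x : Esp n) (f' : ℝ)
    (hf : HasDerivAt f f' (H x)) (hH : DifferentiableAt ℝ H x) :
    HasGradientAt (f ∘ H) (f' • gradient H x) x := by
  have h1 : HasFDerivAt (f ∘ H) (f' • fderiv ℝ H x) x :=
    hf.comp_hasFDerivAt x hH.hasFDerivAt
  have h2 : HasFDerivAt H (InnerProductSpace.toDual ℝ (Esp n) (gradient H x)) x :=
    hH.hasGradientAt.hasFDerivAt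
  have h3 : fderiv ℝ H x = InnerProductSpace.toDual ℝ (Esp n) (gradient H x) :=
    (hH.hasFDerivAt.unique h2)
  rw [hasGradientAt_iff_hasFDerivAt, map_smul, ← h3]
  exact h1

lemma conserved (H : Esp n → ℝ) (hH : Differentiable ℝ H) (c : ℝ → ℝ) (γ : ℝ → Esp n)
    (hγ : ∀ t, HasDerivAt γ (c t • hamVF H (γ t)) t) : ∀ t s, H (γ t) = H (γ s) := by
  have key : ∀ t, HasDerivAt (fun t => H (γ t)) 0 t := by
    intro t
    have h2 : HasFDerivAt H (InnerProductSpace.toDual ℝ (Esp n) (gradient H (γ t))) (γ t) :=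
      (hH (γ t)).hasGradientAt.hasFDerivAt
    have := h2.comp_hasDerivAt t (hγ t)
    refine this.congr_deriv ?_
    rw [InnerProductSpace.toDual_apply_apply, hamVF, real_inner_smul_right, inner_I_self, mul_zero]
  have hdiff : Differentiable ℝ (fun t => H (γ t)) := fun t => (key t).differentiableAt
  have hderiv : ∀ t, deriv (fun t => H (γ t)) t = 0 := fun t => (key t).deriv
  exact is_const_of_deriv_eq_zero hdiff hderiv

lemma no_fast_comp (H : Esp n → ℝ) (f : ℝ → ℝ) (hH : ContDiff ℝ (⊤ : ℕ∞) H)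
    (hf : ContDiff ℝ (⊤ : ℕ∞) f) (hf0 : ∀ s, 0 ≤ deriv f s) (hf1 : ∀ s, deriv f s ≤ 1)
    (hno : ¬ HasFastOrbit H) : ¬ HasFastOrbit (f ∘ H) := by
  rintro ⟨γ, T, ⟨hT, horb, hper, t₀, t₁, hne⟩, hT1⟩
  have hHd : Differentiable ℝ H := hH.differentiable (by simp)
  have hfd : Differentiable ℝ f := hf.differentiable (by simp)
  -- hamVF (f ∘ H) x = deriv f (H x) • hamVF H x
  have hvf : ∀ x, hamVF (f ∘ H) x = deriv f (H x) • hamVF H x := by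
    intro x
    have := (hasGradientAt_comp f H x (deriv f (H x)) ((hfd (H x)).hasDerivAt) (hHd x)).gradient
    rw [hamVF, hamVF, this, smul_comm]
  have horb' : ∀ t, HasDerivAt γ (deriv f (H (γ t)) • hamVF H (γ t)) t := by
    intro t; rw [← hvf]; exact horb t
  have hcons := conserved H hHd _ γ horb'
  set c := deriv f (H (γ 0)) with hc
  have horb'' : ∀ t, HasDerivAt γ (c • hamVF H (γ t)) t := by
    intro t; rw [hc, hcons 0 t]; exact horb' t
  rcases eq_or_lt_of_le (hf0 (H (γ 0))) with hc0 | hc0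
  · -- c = 0 : γ constant, contradiction
    have : ∀ t, HasDerivAt γ 0 t := by
      intro t; have := horb'' t
      have hcz : c = 0 := hc.trans hc0.symm
      rwa [hcz, zero_smul] at this
    exact hne (is_const_of_deriv_eq_zero (fun t => (this t).differentiableAt)
      (fun t => (this t).deriv) t₀ t₁)
  · -- c > 0 : reparametrize
    apply hno
    refine ⟨fun t => γ (c⁻¹ * t), c * T, ⟨by positivity, ?_, ?_, ?_⟩, ?_⟩
    · intro t
      have hin : HasDerivAt (fun t : ℝ => c⁻¹ * t) c⁻¹ t := by
        simpa using (hasDerivAt_id t).const_mul c⁻¹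
      have := (horb'' (c⁻¹ * t)).scomp t hin
      simp only [smul_smul, inv_mul_cancel₀ (show c ≠ 0 from hc0.ne'), one_smul] at this; exact this
    · intro t
      have : c⁻¹ * (t + c * T) = c⁻¹ * t + T := by rw [mul_add, ← mul_assoc, inv_mul_cancel₀ (show c ≠ 0 from hc0.ne'), one_mul]
      show γ (c⁻¹ * (t + c * T)) = γ (c⁻¹ * t)
      rw [this, hper]
    · exact ⟨c * t₀, c * t₁, by simpa [inv_mul_cancel_left₀ (show c ≠ 0 from hc0.ne')] using hne⟩
    · exact mul_le_one₀ (hf1 _) hT.le hT1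

lemma exists_cap_fn (a b : ℝ) (ha : 0 < a) (hab : a < b) :
    ∃ f : ℝ → ℝ, ContDiff ℝ (⊤ : ℕ∞) f ∧ (∀ s, s ≤ 0 → f s = 0) ∧ (∀ s, b ≤ s → f s = a) ∧
      (∀ s, 0 ≤ f s ∧ f s ≤ a) ∧ (∀ s, 0 ≤ deriv f s ∧ deriv f s ≤ 1) := by
  set ε : ℝ := (b - a) / 4 with hε
  have hεpos : 0 < ε := by simp [hε]; linarith
  set g : ℝ → ℝ := fun s => Real.smoothTransition (s / ε) * Real.smoothTransition ((b - s) / ε)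
    with hg
  have hgc : ContDiff ℝ (⊤ : ℕ∞) g :=
    (Real.smoothTransition.contDiff.comp (contDiff_id.div_const ε)).mul
      (Real.smoothTransition.contDiff.comp ((contDiff_const.sub contDiff_id).div_const ε))
  have hgcont : Continuous g := hgc.continuous
  have hg0 : ∀ s, s ≤ 0 → g s = 0 := fun s hs => by
    have h := Real.smoothTransition.zero_of_nonpos
      (div_nonpos_of_nonpos_of_nonneg hs hεpos.le)
    simp [hg, h]
  have hgb : ∀ s, b ≤ s → g s = 0 := fun s hs => by
    have h := Real.smoothTransition.zero_of_nonpos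
      (div_nonpos_of_nonpos_of_nonneg (show b - s ≤ 0 by linarith) hεpos.le)
    simp [hg, h]
  have hg1 : ∀ s, ε ≤ s → s ≤ b - ε → g s = 1 := fun s h1 h2 => by
    rw [hg]
    simp only []
    rw [Real.smoothTransition.one_of_one_le (by rw [le_div_iff₀ hεpos]; linarith),
      Real.smoothTransition.one_of_one_le (by rw [le_div_iff₀ hεpos]; linarith), mul_one]
  have hgnn : ∀ s, 0 ≤ g s := fun s =>
    mul_nonneg (Real.smoothTransition.nonneg _) (Real.smoothTransition.nonneg _)
  have hgle1 : ∀ s, g s ≤ 1 := fun s =>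
    mul_le_one₀ (Real.smoothTransition.le_one _) (Real.smoothTransition.nonneg _)
      (Real.smoothTransition.le_one _)
  have hint : ∀ u v : ℝ, IntervalIntegrable g MeasureTheory.volume u v :=
    fun u v => hgcont.intervalIntegrable u v
  set I : ℝ := ∫ t in (0:ℝ)..b, g t with hI
  have hεb : ε ≤ b - ε := by rw [hε]; linarith
  have hmid : (∫ t in ε..(b - ε), g t) = b - 2 * ε := by
    rw [intervalIntegral.integral_congr (g := fun _ => (1:ℝ)) (fun t ht => by
      rw [uIcc_of_le hεb] at ht
      exact hg1 t ht.1 ht.2)]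
    simp; ring
  have hIa : a < I := by
    have h1 : (∫ t in (0:ℝ)..ε, g t) + (∫ t in ε..(b-ε), g t) = ∫ t in (0:ℝ)..(b-ε), g t :=
      intervalIntegral.integral_add_adjacent_intervals (hint _ _) (hint _ _)
    have h2 : (∫ t in (0:ℝ)..(b-ε), g t) + (∫ t in (b-ε)..b, g t) = ∫ t in (0:ℝ)..b, g t :=
      intervalIntegral.integral_add_adjacent_intervals (hint _ _) (hint _ _)
    have h3 : 0 ≤ ∫ t in (0:ℝ)..ε, g t := intervalIntegral.integral_nonneg hεpos.le (fun t _ => hgnn t)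
    have h4 : 0 ≤ ∫ t in (b-ε)..b, g t := intervalIntegral.integral_nonneg (by linarith) (fun t _ => hgnn t)
    have : b - 2*ε ≤ I := by rw [hI, ← h2, ← h1, hmid]; linarith
    have : a < b - 2*ε := by rw [hε]; linarith
    linarith
  have hIpos : 0 < I := lt_trans ha hIa
  set f : ℝ → ℝ := fun s => (a / I) * ∫ t in (0:ℝ)..s, g t with hf
  have hderiv : ∀ s, HasDerivAt f ((a / I) * g s) s := by
    intro s
    exact ((hgcont.integral_hasStrictDerivAt 0 s).hasDerivAt).const_mul (a / I)
  have hderiv' : ∀ s, deriv f s = (a / I) * g s := fun s => (hderiv s).deriv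
  have hfd : Differentiable ℝ f := fun s => (hderiv s).differentiableAt
  have hf0 : ∀ s, s ≤ 0 → f s = 0 := by
    intro s hs
    rw [hf]
    simp only []
    rw [intervalIntegral.integral_congr (g := fun _ => (0:ℝ)) (fun t ht => by
      rw [uIcc_comm, uIcc_of_le hs] at ht
      exact hg0 t ht.2), intervalIntegral.integral_zero, mul_zero]
  have hfb : ∀ s, b ≤ s → f s = a := by
    intro s hs
    have hsplit : (∫ t in (0:ℝ)..b, g t) + (∫ t in b..s, g t) = ∫ t in (0:ℝ)..s, g t :=
      intervalIntegral.integral_add_adjacent_intervals (hint _ _) (hint _ _)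
    have hz : (∫ t in b..s, g t) = 0 := by
      rw [intervalIntegral.integral_congr (g := fun _ => (0:ℝ)) (fun t ht => by
        rw [uIcc_of_le hs] at ht
        exact hgb t ht.1), intervalIntegral.integral_zero]
    rw [hf]
    simp only []
    rw [← hsplit, hz, add_zero, ← hI, div_mul_cancel₀ a hIpos.ne']
  have hmono : Monotone f :=
    monotone_of_deriv_nonneg hfd (fun s => by
      rw [hderiv']
      exact mul_nonneg (div_nonneg ha.le hIpos.le) (hgnn s))
  have hbnd : ∀ s, 0 ≤ f s ∧ f s ≤ a := by
    intro s
    constructor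
    · rcases le_or_gt s 0 with h | h
      · rw [hf0 s h]
      · rw [← hf0 0 le_rfl]; exact hmono h.le
    · rcases le_or_gt b s with h | h
      · rw [hfb s h]
      · rw [← hfb b le_rfl]; exact hmono h.le
  refine ⟨f, ?_, hf0, hfb, hbnd, fun s => ⟨?_, ?_⟩⟩
  · rw [show ((⊤ : ℕ∞) : WithTop ℕ∞) = (⊤ : ℕ∞) from rfl]
    refine contDiff_infty_iff_deriv.2 ⟨hfd, ?_⟩
    have : deriv f = fun s => (a / I) * g s := funext hderiv'
    rw [this]
    exact contDiff_const.mul hgc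
  · rw [hderiv']
    exact mul_nonneg (div_nonneg ha.le hIpos.le) (hgnn s)
  · rw [hderiv']
    calc (a / I) * g s ≤ (a / I) * 1 :=
          mul_le_mul_of_nonneg_left (hgle1 s) (div_nonneg ha.le hIpos.le)
      _ ≤ 1 := by rw [mul_one]; exact (div_le_one hIpos).2 hIa.le

/-- **Theorem 2.7(1) of Ginzburg–Gürel** for open subsets of standard `ℝ^{2n}`:
the relative Hofer–Zehnder capacity `c_HZ(V, Z)` equals the infimum of the set
of constants `C > 0` such that every smooth `H` with compact support in `V`
and `min_Z H > C` has a fast nonconstant periodic orbit (with `sInf ∅ = ∞`). -/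
theorem stmt_2 (n : ℕ) (hn : 1 ≤ n) (V Z : Set (Esp n)) (hV : IsOpen V)
    (hZcpt : IsCompact Z) (hZne : Z.Nonempty) (hZV : Z ⊆ V) :
    relCap V Z = sInf {C : ℝ≥0∞ | 0 < C ∧ ∀ H : Esp n → ℝ,
      ContDiff ℝ (⊤ : ℕ∞) H → IsCompact (tsupport H) → tsupport H ⊆ V →
      C < ENNReal.ofReal (sInf (H '' Z)) → HasFastOrbit H} := by
  apply le_antisymm
  · -- easy direction
    refine le_sInf fun C hC => ?_
    obtain ⟨hCpos, hCprop⟩ := hC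
    refine sSup_le fun c hc => ?_
    obtain ⟨H, ⟨hsm, hcpt, hsub, ⟨U, hUopen, hZU, c₀, hconst⟩, hmax⟩, hnofast, z, hz, rfl⟩ := hc
    by_contra hlt
    push_neg at hlt
    apply hnofast
    apply hCprop H hsm hcpt hsub
    have himg : H '' Z = {c₀} := by
      apply eq_singleton_iff_nonempty_unique_mem.2
      exact ⟨(hZne.image H), fun y ⟨x, hx, hxy⟩ => hxy ▸ hconst x (hZU hx)⟩
    rw [himg, csInf_singleton, ← hconst z (hZU hz)]
    exact hlt
  · -- hard direction
    by_contra hlt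
    push_neg at hlt
    obtain ⟨C, hC1, hC2⟩ := exists_between hlt
    have hCnotmem : C ∉ {C : ℝ≥0∞ | 0 < C ∧ ∀ H : Esp n → ℝ,
        ContDiff ℝ (⊤ : ℕ∞) H → IsCompact (tsupport H) → tsupport H ⊆ V →
        C < ENNReal.ofReal (sInf (H '' Z)) → HasFastOrbit H} :=
      fun hm => absurd (sInf_le hm) (not_le.2 hC2)
    have hCpos : 0 < C := lt_of_le_of_lt zero_le hC1
    have hCne : C ≠ ⊤ := hC2.ne_top
    simp only [mem_setOf_eq, not_and, not_forall, Classical.not_imp] at hCnotmem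
    obtain ⟨H, hsm, hcpt, hsub, hbig, hnofast⟩ := hCnotmem hCpos
    set m := sInf (H '' Z) with hm
    have hmpos : 0 < m := ENNReal.ofReal_pos.1 (hCpos.trans hbig)
    have ham : C.toReal < m := (ENNReal.lt_ofReal_iff_toReal_lt hCne).1 hbig
    set a := C.toReal with haa
    have hapos : 0 < a := ENNReal.toReal_pos hCpos.ne' hCne
    set b := (a + m) / 2 with hb
    have hab : a < b := by rw [hb]; linarith
    have hbm : b < m := by rw [hb]; linarith
    obtain ⟨f, hfsm, hfz, hfa, hfbd, hfder⟩ := exists_cap_fn a b hapos hab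
    set K := f ∘ H with hK
    have hmle : ∀ z ∈ Z, m ≤ H z := fun z hz =>
      csInf_le ((hZcpt.image hsm.continuous).bddBelow) ⟨z, hz, rfl⟩
    have hKa : ∀ z ∈ Z, K z = a := fun z hz =>
      hfa _ (le_trans hbm.le (hmle z hz))
    have hsupp : tsupport K ⊆ tsupport H := by
      apply closure_mono
      intro x hx
      simp only [Function.mem_support] at hx ⊢
      intro h0
      exact hx (by simp [hK, Function.comp, h0, hfz 0 le_rfl])
    have hclass : InHclass V Z K := by
      refine ⟨hfsm.comp hsm, hcpt.of_isClosed_subset isClosed_closure hsupp,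
        hsupp.trans hsub, ⟨H ⁻¹' Ioi b, IsOpen.preimage hsm.continuous isOpen_Ioi,
        fun z hz => lt_of_lt_of_le hbm (hmle z hz), a, fun x hx => hfa _ (le_of_lt hx)⟩, ?_⟩
      intro z hz x
      rw [hKa z hz]
      exact (hfbd (H x)).2
    obtain ⟨z₀, hz₀⟩ := hZne
    have hmem : ENNReal.ofReal a ∈ {c | ∃ H, InHclass V Z H ∧ ¬ HasFastOrbit H ∧
        ∃ z ∈ Z, c = ENNReal.ofReal (H z)} :=
      ⟨K, hclass, no_fast_comp H f hsm hfsm (fun s => (hfder s).1) (fun s => (hfder s).2) hnofast,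
        z₀, hz₀, by rw [hKa z₀ hz₀]⟩
    have hle : ENNReal.ofReal a ≤ relCap V Z := le_sSup hmem
    rw [haa, ENNReal.ofReal_toReal hCne] at hle
    exact absurd hle (not_le.2 hC1)
end
end

section
/- Let n ≥ 1, let V ⊆ ℝ^{2n} be open, let U ⊆ V be open with compact closure Ū contained in V, and let Z ⊂ U be nonempty and compact. Then c_HZ(U,Z) + c_HZ(V,Ū) ≤ c_HZ(V,Z), where the sum is taken in (0,+∞]. In particular, for any p ∈ U, c_HZ(U,{p}) + c_HZ(V,Ū) ≤ c_HZ(V,{p}). -/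
open scoped RealInnerProductSpace ENNReal NNReal Topology
open Metric Set

noncomputable section

variable {n : ℕ}

/-! ### Auxiliary lemmas -/


lemma my_grad_add (f g : Esp n → ℝ) (x : Esp n) (hf : DifferentiableAt ℝ f x)
    (hg : DifferentiableAt ℝ g x) :
    gradient (fun y => f y + g y) x = gradient f x + gradient g x := by
  unfold gradient
  rw [fderiv_fun_add hf hg, map_add]

lemma my_grad_loc_const (f : Esp n → ℝ) (x : Esp n) (c : ℝ)
    (h : f =ᶠ[𝓝 x] fun _ => c) : gradient f x = 0 := by
  unfold gradient
  rw [h.fderiv_eq, fderiv_fun_const]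
  simp

/-- If a curve solves `γ' = w(t)` with `w(t) = 0` whenever `γ t` lies in an
open set `O`, and `γ` is nonconstant, then `γ` never meets `O`. -/
lemma orbit_avoid (γ w : ℝ → Esp n) (hd : ∀ t, HasDerivAt γ (w t) t)
    (O : Set (Esp n)) (hO : IsOpen O) (hzero : ∀ t, γ t ∈ O → w t = 0)
    (hnc : ∃ t₀ t₁, γ t₀ ≠ γ t₁) : ∀ t, γ t ∉ O := by
  have hcont : Continuous γ := continuous_iff_continuousAt.2 fun t => (hd t).continuousAt
  intro s hs
  set c := γ s with hc
  set T : Set ℝ := {t | γ t = c} with hT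
  have hTclosed : IsClosed T := isClosed_eq hcont continuous_const
  have hTopen : IsOpen T := by
    rw [Metric.isOpen_iff]
    intro t ht
    have htO : γ t ∈ O := by rw [ht]; exact hs
    obtain ⟨ε, hε, hball⟩ := Metric.isOpen_iff.mp (hO.preimage hcont) t htO
    refine ⟨ε, hε, fun u hu => ?_⟩
    have hIccO : ∀ a b : ℝ, a ∈ ball t ε → b ∈ ball t ε →
        ∀ x ∈ Icc a b, x ∈ ball t ε := by
      intro a b ha hb x hx
      rw [mem_ball, Real.dist_eq, abs_lt] at *
      constructor <;> [linarith [hx.1, ha.1]; linarith [hx.2, hb.2]]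
    have key : ∀ a b : ℝ, a ∈ ball t ε → b ∈ ball t ε → ∀ x ∈ Icc a b, γ x = γ a := by
      intro a b ha hb
      refine constant_of_has_deriv_right_zero (hcont.continuousOn) ?_
      intro x hx
      have hxball : x ∈ ball t ε := hIccO a b ha hb x ⟨hx.1, le_of_lt hx.2⟩
      have := hzero x (hball hxball)
      simpa [this] using (hd x).hasDerivWithinAt
    have htball : t ∈ ball t ε := mem_ball_self hε
    rcases le_total t u with h | h
    · have := key t u htball hu u ⟨h, le_rfl⟩
      show γ u = c
      rw [this, ht]
    · have := key u t hu htball t ⟨h, le_rfl⟩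
      show γ u = c
      rw [← this, ht]
  have : T = univ := by
    rcases isClopen_iff.mp ⟨hTclosed, hTopen⟩ with h | h
    · have hsT : s ∈ T := rfl
      rw [h] at hsT
      exact absurd hsT (notMem_empty s)
    · exact h
  obtain ⟨t₀, t₁, hne⟩ := hnc
  exact hne (by
    have h0 : γ t₀ = c := by have := this ▸ mem_univ t₀; exact this
    have h1 : γ t₁ = c := by have := this ▸ mem_univ t₁; exact this
    rw [h0, h1])

lemma dichotomy (γ : ℝ → Esp n) (hcont : Continuous γ) (W K : Set (Esp n))
    (hW : IsOpen W) (hK : IsClosed K) (hKW : K ⊆ W)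
    (havoid : ∀ t, γ t ∈ W → γ t ∈ K) :
    (∀ t, γ t ∈ W) ∨ (∀ t, γ t ∉ W) := by
  have heq : γ ⁻¹' W = γ ⁻¹' K :=
    subset_antisymm (fun t ht => havoid t ht) (fun t ht => hKW ht)
  have hop : IsOpen (γ ⁻¹' W) := hW.preimage hcont
  have hcl : IsClosed (γ ⁻¹' W) := heq ▸ hK.preimage hcont
  rcases isClopen_iff.mp ⟨hcl, hop⟩ with h | h
  · right; intro t ht
    exact absurd (show t ∈ γ ⁻¹' W from ht) (by simp [h])
  · left; intro t
    exact (h ▸ mem_univ t : t ∈ γ ⁻¹' W)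

lemma zero_no_fast : ¬ HasFastOrbit (fun _ : Esp n => (0:ℝ)) := by
  rintro ⟨γ, T, ⟨hT, hd, hper, hnc⟩, hT1⟩
  have hzero : ∀ t, hamVF (fun _ : Esp n => (0:ℝ)) (γ t) = 0 := by
    intro t
    unfold hamVF
    rw [my_grad_loc_const _ _ 0 (Filter.Eventually.of_forall fun _ => rfl)]
    simp
  have := orbit_avoid γ _ hd univ isOpen_univ (fun t _ => hzero t) hnc
  exact this 0 (mem_univ _)

lemma zero_mem_cap (V Z : Set (Esp n)) (hZne : Z.Nonempty) :
    (0 : ℝ≥0∞) ∈ {c | ∃ H, InHclass V Z H ∧ ¬ HasFastOrbit H ∧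
      ∃ z ∈ Z, c = ENNReal.ofReal (H z)} := by
  obtain ⟨z, hz⟩ := hZne
  refine ⟨fun _ => 0, ⟨contDiff_const, ?_, ?_, ⟨univ, isOpen_univ, subset_univ _,
    0, fun _ _ => rfl⟩, fun _ _ _ => le_rfl⟩, zero_no_fast, z, hz, by simp⟩
  · have : tsupport (fun _ : Esp n => (0:ℝ)) = ∅ := by
      simp [tsupport, Function.support]
    rw [this]; exact isCompact_empty
  · have : tsupport (fun _ : Esp n => (0:ℝ)) = ∅ := by
      simp [tsupport, Function.support]
    rw [this]; exact empty_subset _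

lemma key_lemma (hn : 1 ≤ n) (V U Z : Set (Esp n)) (hUV : U ⊆ V)
    (hZne : Z.Nonempty) (hZU : Z ⊆ U) :
    relCap U Z + relCap V (closure U) ≤ relCap V Z := by
  haveI : Nontrivial (Esp n) := by
    refine ⟨0, EuclideanSpace.single ⟨0, hn⟩ 1, fun h => ?_⟩
    have := congrArg (fun v : Esp n => v ⟨0, hn⟩) h
    simp [EuclideanSpace.single_apply] at this
  haveI : NoncompactSpace (Esp n) := NormedSpace.noncompactSpace ℝ (Esp n)
  obtain ⟨z₀, hz₀⟩ := hZne
  have hz₀cl : z₀ ∈ closure U := subset_closure (hZU hz₀)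
  rw [relCap, relCap, relCap,
    ENNReal.sSup_add ⟨0, zero_mem_cap U Z ⟨z₀, hz₀⟩⟩]
  refine iSup₂_le fun a ha => ?_
  rw [ENNReal.add_sSup ⟨0, zero_mem_cap V (closure U) ⟨z₀, hz₀cl⟩⟩]
  refine iSup₂_le fun b hb => ?_
  obtain ⟨H₁, ⟨h1sm, h1cpt, h1sup, ⟨U₁, hU₁o, hZU₁, c₁, hc₁⟩, h1max⟩,
    h1fast, z₁, hz₁, ha'⟩ := ha
  obtain ⟨H₂, ⟨h2sm, h2cpt, h2sup, ⟨W, hWo, hUW, c₂, hc₂⟩, h2max⟩,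
    h2fast, z₂, hz₂, hb'⟩ := hb
  set H : Esp n → ℝ := fun x => H₁ x + H₂ x with hH
  apply le_sSup
  -- basic differentiability
  have d1 : ∀ x, DifferentiableAt ℝ H₁ x := fun x =>
    (h1sm.differentiable (by simp)).differentiableAt
  have d2 : ∀ x, DifferentiableAt ℝ H₂ x := fun x =>
    (h2sm.differentiable (by simp)).differentiableAt
  have hgrad : ∀ x, gradient H x = gradient H₁ x + gradient H₂ x := fun x =>
    my_grad_add H₁ H₂ x (d1 x) (d2 x)
  have g1zero : ∀ x, x ∉ tsupport H₁ → gradient H₁ x = 0 := by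
    intro x hx
    exact my_grad_loc_const _ _ 0 (notMem_tsupport_iff_eventuallyEq.mp hx)
  have g2zero : ∀ x, x ∈ W → gradient H₂ x = 0 := by
    intro x hx
    exact my_grad_loc_const _ _ c₂
      (Filter.eventually_of_mem (hWo.mem_nhds hx) fun y hy => hc₂ y hy)
  -- tsupport of the sum
  have hsub : tsupport H ⊆ tsupport H₁ ∪ tsupport H₂ := by
    have hs : Function.support H ⊆ Function.support H₁ ∪ Function.support H₂ := by
      intro x hx
      simp only [Function.mem_support, hH, mem_union] at hx ⊢
      by_contra hcon
      push_neg at hcon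
      obtain ⟨h1, h2⟩ := hcon
      exact hx (by rw [h1, h2, add_zero])
    have := closure_mono hs
    rwa [closure_union] at this
  -- no fast orbit of H
  have hnofast : ¬ HasFastOrbit H := by
    rintro ⟨γ, T, ⟨hT, hd, hper, hnc⟩, hT1⟩
    have hcont : Continuous γ := continuous_iff_continuousAt.2 fun t => (hd t).continuousAt
    have hKW : tsupport H₁ ⊆ W := fun x hx => hUW (subset_closure (h1sup hx))
    have hOopen : IsOpen (W \ tsupport H₁) := hWo.sdiff (isClosed_tsupport _)
    have hzero : ∀ t, γ t ∈ W \ tsupport H₁ → hamVF H (γ t) = 0 := by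
      intro t ⟨htW, htK⟩
      unfold hamVF
      rw [hgrad, g1zero _ htK, g2zero _ htW]
      simp
    have havoidO := orbit_avoid γ _ hd _ hOopen hzero hnc
    have havoid : ∀ t, γ t ∈ W → γ t ∈ tsupport H₁ := by
      intro t ht
      by_contra hcon
      exact havoidO t ⟨ht, hcon⟩
    rcases dichotomy γ hcont W (tsupport H₁) hWo (isClosed_tsupport _) hKW havoid with
      hall | hnone
    · refine h1fast ⟨γ, T, ⟨hT, fun t => ?_, hper, hnc⟩, hT1⟩
      have heq : hamVF H (γ t) = hamVF H₁ (γ t) := by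
        unfold hamVF
        rw [hgrad, g2zero _ (hall t), add_zero]
      exact heq ▸ hd t
    · refine h2fast ⟨γ, T, ⟨hT, fun t => ?_, hper, hnc⟩, hT1⟩
      have heq : hamVF H (γ t) = hamVF H₂ (γ t) := by
        unfold hamVF
        rw [hgrad, g1zero _ (fun hc => hnone t (hKW hc)), zero_add]
      exact heq ▸ hd t
  -- H is in the class for (V, Z)
  refine ⟨H, ⟨h1sm.add h2sm, ?_, ?_, ⟨U₁ ∩ W, hU₁o.inter hWo,
      subset_inter hZU₁ (fun z hz => hUW (subset_closure (hZU hz))),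
      c₁ + c₂, fun x hx => by rw [hH]; simp only []; rw [hc₁ x hx.1, hc₂ x hx.2]⟩,
      ?_⟩, hnofast, z₀, hz₀, ?_⟩
  · exact (h1cpt.union h2cpt).of_isClosed_subset (isClosed_tsupport _) hsub
  · exact hsub.trans (union_subset (h1sup.trans hUV) h2sup)
  · intro z hz x
    exact add_le_add (h1max z hz x) (h2max z (subset_closure (hZU hz)) x)
  · -- values: a + b = ofReal (H z₀)
    obtain ⟨x₁, hx₁⟩ : ∃ x, x ∉ tsupport H₁ := by
      rcases (ne_univ_iff_exists_notMem _).mp h1cpt.ne_univ with ⟨x, hx⟩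
      exact ⟨x, hx⟩
    obtain ⟨x₂, hx₂⟩ : ∃ x, x ∉ tsupport H₂ := by
      rcases (ne_univ_iff_exists_notMem _).mp h2cpt.ne_univ with ⟨x, hx⟩
      exact ⟨x, hx⟩
    have h1nn : 0 ≤ H₁ z₀ := by
      have := h1max z₀ hz₀ x₁
      have hzero : H₁ x₁ = 0 := image_eq_zero_of_notMem_tsupport hx₁
      linarith
    have h2nn : 0 ≤ H₂ z₀ := by
      have := h2max z₀ hz₀cl x₂
      have hzero : H₂ x₂ = 0 := image_eq_zero_of_notMem_tsupport hx₂
      linarith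
    have e1 : H₁ z₁ = H₁ z₀ := le_antisymm (h1max z₀ hz₀ z₁) (h1max z₁ hz₁ z₀)
    have e2 : H₂ z₂ = H₂ z₀ := le_antisymm (h2max z₀ hz₀cl z₂) (h2max z₂ hz₂ z₀)
    rw [ha', hb', e1, e2, hH]
    exact (ENNReal.ofReal_add h1nn h2nn).symm


/-- **Proposition 5.3 of Ginzburg–Gürel** for open subsets of standard
`ℝ^{2n}`: if `U` is open with compact closure `Ū ⊆ V` and `Z ⊂ U` is nonempty
compact, then `c_HZ(U, Z) + c_HZ(V, Ū) ≤ c_HZ(V, Z)`; in particular, for any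
`p ∈ U`, `c_HZ(U, {p}) + c_HZ(V, Ū) ≤ c_HZ(V, {p})`. -/
theorem stmt_7 (n : ℕ) (hn : 1 ≤ n) (V U Z : Set (Esp n)) (hV : IsOpen V)
    (hU : IsOpen U) (hUV : U ⊆ V) (hUcl : IsCompact (closure U))
    (hUclV : closure U ⊆ V)
    (hZcpt : IsCompact Z) (hZne : Z.Nonempty) (hZU : Z ⊆ U) :
    relCap U Z + relCap V (closure U) ≤ relCap V Z ∧
      ∀ p ∈ U, relCap U {p} + relCap V (closure U) ≤ relCap V {p} := by
  refine ⟨key_lemma hn V U Z hUV hZne hZU, fun p hp => ?_⟩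
  exact key_lemma hn V U {p} hUV ⟨p, rfl⟩ (singleton_subset_iff.mpr hp)
end
end

section
/- Let n ≥ 1 and let F : ℝ^{2n} → ℝ be a smooth proper function. Suppose ε₀ > 0 is such that every c ∈ [−ε₀, ε₀] is a regular value of F and the sublevel set U_ε = F⁻¹((−∞, ε)) is nonempty and bounded for every ε ∈ [−ε₀, ε₀]. Assume that the compact hypersurface S = F⁻¹(0) has relative Lipschitz type, i.e., limsup_{ε → 0+} c_HZ(U_ε, Ū₀)/ε < ∞, where Ū₀ is the closure of U₀ = F⁻¹((−∞,0)). Then S carries a closed characteristic: there exists a nonconstant periodic solution γ of γ'(t) = J∇F(γ(t)) whose image is contained in S. -/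
open scoped RealInnerProductSpace ENNReal NNReal Topology
open Metric Set

noncomputable section

variable {n : ℕ}

lemma key_inner (x : Esp n) : ⟪x, (Complex.I • x : Esp n)⟫ = 0 := by
  simp only [PiLp.inner_apply, PiLp.smul_apply]
  refine Finset.sum_eq_zero fun i _ => ?_
  simp [smul_eq_mul]; ring

lemma grad_inner (f : Esp n → ℝ) (x v : Esp n) :
    ⟪gradient f x, v⟫ = fderiv ℝ f x v :=
  InnerProductSpace.toDual_symm_apply

lemma grad_comp {f : ℝ → ℝ} {F : Esp n → ℝ} {x : Esp n}
    (hf : DifferentiableAt ℝ f (F x)) (hF : DifferentiableAt ℝ F x) :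
    gradient (f ∘ F) x = deriv f (F x) • gradient F x := by
  have h1 : HasFDerivAt (f ∘ F) (deriv f (F x) • fderiv ℝ F x) x :=
    (hf.hasDerivAt).comp_hasFDerivAt x hF.hasFDerivAt
  rw [gradient, h1.fderiv, map_smul, gradient]

lemma hamVF_comp {f : ℝ → ℝ} {F : Esp n → ℝ} {x : Esp n}
    (hf : DifferentiableAt ℝ f (F x)) (hF : DifferentiableAt ℝ F x) :
    hamVF (f ∘ F) x = deriv f (F x) • hamVF F x := by
  rw [hamVF, grad_comp hf hF, hamVF, smul_comm]

lemma periodic_nsmul {σ : ℝ → Esp n} {T : ℝ} (h : ∀ t, σ (t + T) = σ t) (m : ℕ) :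
    ∀ t, σ (t + m * T) = σ t := by
  induction m with
  | zero => simp
  | succ k ih =>
    intro t
    have : t + (k + 1 : ℕ) * T = (t + T) + k * T := by push_cast; ring
    rw [this, ih, h]

lemma periodic_neg {σ : ℝ → Esp n} {T : ℝ} (h : ∀ t, σ (t + T) = σ t) (t : ℝ) :
    σ (t - T) = σ t := by
  have := h (t - T); rw [sub_add_cancel] at this; rw [this]

lemma st_deriv_zero {y : ℝ} (h : y < 0 ∨ 1 < y) : deriv Real.smoothTransition y = 0 := by
  rcases h with h | h
  · have : Real.smoothTransition =ᶠ[nhds y] fun _ => (0 : ℝ) := by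
      filter_upwards [Iio_mem_nhds h] with z hz
      exact Real.smoothTransition.zero_of_nonpos (le_of_lt hz)
    rw [this.deriv_eq, deriv_const]
  · have : Real.smoothTransition =ᶠ[nhds y] fun _ => (1 : ℝ) := by
      filter_upwards [Ioi_mem_nhds h] with z hz
      exact Real.smoothTransition.one_of_one_le (le_of_lt hz)
    rw [this.deriv_eq, deriv_const]

lemma exists_st_bound : ∃ B : ℝ, 0 ≤ B ∧ ∀ y, |deriv Real.smoothTransition y| ≤ B := by
  have hc : Continuous (deriv Real.smoothTransition) :=
    (Real.smoothTransition.contDiff (n := ⊤)).continuous_deriv (by exact_mod_cast le_top)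
  obtain ⟨C, hC⟩ := isCompact_Icc.exists_bound_of_continuousOn
    (s := Icc (0:ℝ) 1) (hc.continuousOn (f := deriv Real.smoothTransition))
  refine ⟨max C 0, le_max_right _ _, fun y => ?_⟩
  by_cases hy : y ∈ Icc (0:ℝ) 1
  · exact le_trans (by simpa using hC y hy) (le_max_left _ _)
  · have : y < 0 ∨ 1 < y := by
      rcases lt_or_ge y 0 with h | h
      · exact Or.inl h
      · right; by_contra h'; exact hy ⟨h, not_lt.mp h'⟩
    rw [st_deriv_zero this]; simp


lemma exists_orbit_level {n : ℕ} (F : Esp n → ℝ) (hsm : ContDiff ℝ (⊤:ℕ∞) F)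
    (B R ε : ℝ) (hB : 0 ≤ B) (hBb : ∀ y, |deriv Real.smoothTransition y| ≤ B)
    (hR : 1 ≤ R) (hε : 0 < ε)
    (hne : (F ⁻¹' Iio 0).Nonempty) (hbdd : Bornology.IsBounded (F ⁻¹' Iio ε))
    (hcap : relCap (F ⁻¹' Iio ε) (closure (F ⁻¹' Iio 0)) < ENNReal.ofReal (R * ε)) :
    ∃ σ : ℝ → Esp n, ∃ T c : ℝ,
      (∀ t, HasDerivAt σ (hamVF F (σ t)) t) ∧ (∀ t, σ (t + T) = σ t) ∧
      (∀ t, F (σ t) = c) ∧ 3*R*(B+1) < T ∧ T ≤ 2*(3*R*(B+1)) ∧ 0 < c ∧ c ≤ ε := by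
  have hεne : (3:ℝ)/ε ≠ 0 := by positivity
  set g := Real.smoothTransition with hg
  set c : ℝ := R * ε with hc
  have hcpos : 0 < c := by positivity
  set ℓ : ℝ → ℝ := fun x => (2*ε/3 - x) * (3/ε) with hℓ
  set f : ℝ → ℝ := fun x => c * g (ℓ x) with hf
  set df : ℝ → ℝ := fun x => c * (deriv g (ℓ x) * -(3/ε)) with hdf
  have hgdiff : Differentiable ℝ g :=
    (Real.smoothTransition.contDiff (n := 1)).differentiable (by simp)
  have hℓder : ∀ x : ℝ, HasDerivAt ℓ (-(3/ε)) x := by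
    intro x
    have := ((hasDerivAt_id x).const_sub (2*ε/3)).mul_const (3/ε)
    simpa using this
  have hfder : ∀ x : ℝ, HasDerivAt f (df x) x := by
    intro x
    have h1 : HasDerivAt (fun x => g (ℓ x)) (deriv g (ℓ x) * -(3/ε)) x :=
      (hgdiff.differentiableAt.hasDerivAt).scomp x (hℓder x) |>.congr_deriv
        (by simp [smul_eq_mul]; ring)
    exact h1.const_mul c
  have hderivf : ∀ x : ℝ, deriv f x = df x := fun x => (hfder x).deriv
  have hfsm : ContDiff ℝ (⊤:ℕ∞) f := by
    apply ContDiff.mul contDiff_const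
    exact Real.smoothTransition.contDiff.comp ((contDiff_const.sub contDiff_id).mul contDiff_const)
  set H : Esp n → ℝ := fun x => f (F x) with hH
  have hFdiff : ∀ x, DifferentiableAt ℝ F x :=
    fun x => (hsm.differentiable (by simp)).differentiableAt
  have hHVF : ∀ y : Esp n, hamVF H y = df (F y) • hamVF F y := by
    intro y
    have := hamVF_comp (f := f) (F := F) (x := y)
      (hfsm.differentiable (by simp)).differentiableAt (hFdiff y)
    rw [show H = f ∘ F from rfl, this, hderivf]
  -- membership in the class
  have hsupp : tsupport H ⊆ F ⁻¹' Iic (2*ε/3) := by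
    apply closure_minimal _ (isClosed_Iic.preimage hsm.continuous)
    intro x hx
    simp only [Function.mem_support] at hx
    by_contra hFx
    simp only [mem_preimage, mem_Iic, not_le] at hFx
    apply hx
    have h0 : ℓ (F x) ≤ 0 := by
      rw [hℓ]
      apply mul_nonpos_of_nonpos_of_nonneg <;> [linarith; positivity]
    have h1 : g (ℓ (F x)) = 0 := Real.smoothTransition.zero_of_nonpos h0
    simp [hH, hf, h1]
  have hsub23 : F ⁻¹' Iic (2*ε/3) ⊆ F ⁻¹' Iio ε := fun x hx => by
    simp only [mem_preimage, mem_Iic] at hx; simp only [mem_preimage, mem_Iio]; linarith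
  have hZU : closure (F ⁻¹' Iio 0) ⊆ F ⁻¹' Iio (ε/3) := by
    have h1 : closure (F ⁻¹' Iio 0) ⊆ F ⁻¹' Iic 0 :=
      closure_minimal (fun x hx => show F x ≤ 0 from le_of_lt hx)
        (isClosed_Iic.preimage hsm.continuous)
    intro x hx
    have := h1 hx
    simp only [mem_preimage, mem_Iic] at this
    simp only [mem_preimage, mem_Iio]; linarith
  have hUconst : ∀ x ∈ F ⁻¹' Iio (ε/3), H x = c := by
    intro x hx
    simp only [mem_preimage, mem_Iio] at hx
    have h31 : (ε/3) * (3/ε) = 1 := by field_simp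
    have k1 : (ε/3) * (3/ε) ≤ (2*ε/3 - F x) * (3/ε) :=
      mul_le_mul_of_nonneg_right (by linarith) (by positivity)
    rw [h31] at k1
    have h1 : g (ℓ (F x)) = 1 := Real.smoothTransition.one_of_one_le k1
    simp [hH, hf, h1]
  have hHle : ∀ x, H x ≤ c := by
    intro x
    calc H x ≤ c * 1 :=
          mul_le_mul_of_nonneg_left (Real.smoothTransition.le_one _) (le_of_lt hcpos)
      _ = c := mul_one c
  have hclass : InHclass (F ⁻¹' Iio ε) (closure (F ⁻¹' Iio 0)) H := by
    refine ⟨hfsm.comp hsm, ?_, hsupp.trans hsub23, ⟨F ⁻¹' Iio (ε/3),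
      isOpen_Iio.preimage hsm.continuous, hZU, c, hUconst⟩, ?_⟩
    · exact Metric.isCompact_of_isClosed_isBounded (isClosed_tsupport H)
        (hbdd.subset (hsupp.trans hsub23))
    · intro z hz x
      rw [hUconst z (hZU hz)]; exact hHle x
  -- extract a fast orbit
  have hfast : HasFastOrbit H := by
    by_contra hnf
    obtain ⟨z, hz⟩ := hne
    have hzZ : z ∈ closure (F ⁻¹' Iio 0) := subset_closure hz
    have hzc : H z = c := hUconst z (by
      simp only [mem_preimage, mem_Iio] at hz ⊢; linarith)
    have : ENNReal.ofReal (R * ε) ≤ relCap (F ⁻¹' Iio ε) (closure (F ⁻¹' Iio 0)) := by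
      apply le_sSup
      exact ⟨H, hclass, hnf, z, hzZ, by rw [hzc, hc]⟩
    exact absurd hcap (not_lt.mpr this)
  obtain ⟨γ, T, ⟨hTpos, hode, hper, t₀, t₁, hnc⟩, hT1⟩ := hfast
  -- the orbit lies on a level set
  have hu : ∀ t, HasDerivAt (fun t => F (γ t)) 0 t := by
    intro t
    have h1 : HasDerivAt (fun t => F (γ t)) (fderiv ℝ F (γ t) (hamVF H (γ t))) t :=
      (hFdiff (γ t)).hasFDerivAt.comp_hasDerivAt t (hode t)
    have h2 : fderiv ℝ F (γ t) (hamVF H (γ t)) = 0 := by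
      rw [← grad_inner, hHVF, hamVF, real_inner_smul_right, key_inner, mul_zero]
    rwa [h2] at h1
  have hconst : ∀ t, F (γ t) = F (γ 0) := by
    intro t
    exact is_const_of_deriv_eq_zero (fun s => (hu s).differentiableAt)
      (fun s => (hu s).deriv) t 0
  set c₀ : ℝ := F (γ 0) with hc₀
  set d₀ : ℝ := df c₀ with hd₀
  have hγ' : ∀ t, HasDerivAt γ (d₀ • hamVF F (γ t)) t := by
    intro t
    have := hode t
    rwa [hHVF, hconst t] at this
  have hd₀ne : d₀ ≠ 0 := by
    intro h0
    apply hnc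
    have : ∀ t, HasDerivAt γ 0 t := by
      intro t; have := hγ' t; rwa [h0, zero_smul] at this
    exact is_const_of_deriv_eq_zero (fun s => (this s).differentiableAt)
      (fun s => (this s).deriv) t₀ t₁
  have hdgne : deriv g (ℓ c₀) ≠ 0 := by
    intro h0
    apply hd₀ne
    rw [hd₀, hdf]; simp [h0]
  have hlc₀ : 0 ≤ ℓ c₀ ∧ ℓ c₀ ≤ 1 := by
    by_contra hcon
    apply hdgne
    apply st_deriv_zero
    rcases not_and_or.mp hcon with h | h
    · left
      have := not_le.mp h
      exact this
    · right; exact not_le.mp h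
  have hc₀mem : ε/3 ≤ c₀ ∧ c₀ ≤ 2*ε/3 := by
    obtain ⟨h1, h2⟩ := hlc₀
    rw [hℓ] at h1 h2
    simp only at h1 h2
    have h3 : (0:ℝ) < 3/ε := by positivity
    have ha : 0 ≤ 2*ε/3 - c₀ := (mul_nonneg_iff_of_pos_right h3).mp h1
    have hb : 2*ε/3 - c₀ ≤ 1/(3/ε) := (le_div_iff₀ h3).mpr h2
    rw [one_div_div] at hb
    constructor <;> linarith
  have hd₀le : |d₀| ≤ 3*R*B := by
    rw [hd₀, hdf]
    simp only [abs_mul, abs_neg]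
    rw [abs_of_pos hcpos, abs_of_pos (by positivity : (0:ℝ) < 3/ε)]
    calc c * (|deriv g (ℓ c₀)| * (3/ε)) ≤ c * (B * (3/ε)) := by
          apply mul_le_mul_of_nonneg_left _ (le_of_lt hcpos)
          exact mul_le_mul_of_nonneg_right (hBb _) (by positivity)
      _ = 3*R*B := by rw [hc]; field_simp
  -- reparametrize
  set σ : ℝ → Esp n := fun t => γ (t / d₀) with hσdef
  have hσ : ∀ t, HasDerivAt σ (hamVF F (σ t)) t := by
    intro t
    have h1 : HasDerivAt (fun s : ℝ => s / d₀) (1/d₀) t := by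
      simpa using (hasDerivAt_id t).div_const d₀
    have h2 := (hγ' (t / d₀)).scomp t h1
    have h3 : (1/d₀) • d₀ • hamVF F (γ (t/d₀)) = hamVF F (σ t) := by
      rw [smul_smul, one_div, inv_mul_cancel₀ hd₀ne, one_smul]
    rwa [h3] at h2
  set T₁ : ℝ := |d₀| * T with hT₁
  have hT₁pos : 0 < T₁ := mul_pos (abs_pos.mpr hd₀ne) hTpos
  have hperσ : ∀ t, σ (t + T₁) = σ t := by
    intro t
    rw [hσdef]
    simp only
    rcases le_or_gt 0 d₀ with h | h
    · have hd : 0 < d₀ := lt_of_le_of_ne h (Ne.symm hd₀ne)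
      have : (t + d₀ * T) / d₀ = t / d₀ + T := by field_simp
      rw [hT₁, abs_of_pos hd, this, hper]
    · rw [hT₁, abs_of_neg h]
      have : (t + -d₀ * T) / d₀ = t / d₀ - T := by field_simp; ring
      rw [this, periodic_neg hper]
  set P : ℝ := 3*R*(B+1) with hP
  have hPpos : 0 < P := by positivity
  have hT₁leP : T₁ ≤ P := by
    have : T₁ ≤ |d₀| := by
      calc T₁ = |d₀| * T := hT₁
        _ ≤ |d₀| * 1 := mul_le_mul_of_nonneg_left hT1 (abs_nonneg _)
        _ = |d₀| := mul_one _
    calc T₁ ≤ |d₀| := this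
      _ ≤ 3*R*B := hd₀le
      _ ≤ P := by rw [hP]; nlinarith
  set m : ℕ := Nat.floor (P / T₁) + 1 with hm
  have hmT₁gt : P < m * T₁ := by
    have h1 : P / T₁ < (Nat.floor (P / T₁) : ℝ) + 1 := Nat.lt_floor_add_one _
    have := (div_lt_iff₀ hT₁pos).mp h1
    calc P < ((Nat.floor (P / T₁) : ℝ) + 1) * T₁ := this
      _ = m * T₁ := by rw [hm]; push_cast; ring
  have hmT₁le : (m : ℝ) * T₁ ≤ 2 * P := by
    have h1 : (Nat.floor (P / T₁) : ℝ) ≤ P / T₁ := Nat.floor_le (by positivity)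
    have h2 : (m : ℝ) ≤ P / T₁ + 1 := by rw [hm]; push_cast; linarith
    calc (m : ℝ) * T₁ ≤ (P / T₁ + 1) * T₁ := mul_le_mul_of_nonneg_right h2 (le_of_lt hT₁pos)
      _ = P + T₁ := by field_simp
      _ ≤ 2 * P := by linarith
  refine ⟨σ, m * T₁, c₀, hσ, periodic_nsmul hperσ m, fun t => hconst (t / d₀),
    hmT₁gt, hmT₁le, by linarith [hc₀mem.1, hε], by linarith [hc₀mem.2]⟩

lemma sol_lipschitz {n : ℕ} {X : Esp n → Esp n} {f : ℝ → Esp n} {M : ℝ}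
    (hf : ∀ t, HasDerivAt f (X (f t)) t) (hM : ∀ t, ‖X (f t)‖ ≤ M) (a b : ℝ) :
    dist (f a) (f b) ≤ M * |a - b| := by
  have := Convex.norm_image_sub_le_of_norm_hasDerivWithin_le
    (f := f) (f' := fun t => X (f t)) (s := univ) (C := M)
    (fun x _ => (hf x).hasDerivWithinAt) (fun x _ => hM x) convex_univ
    (mem_univ b) (mem_univ a)
  rw [dist_eq_norm]
  simpa [Real.norm_eq_abs] using this

lemma gronwall_dist {n : ℕ} {X : Esp n → Esp n} {L : ℝ≥0}
    (hL : LipschitzWith L X) {f g : ℝ → Esp n}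
    (hf : ∀ t, HasDerivAt f (X (f t)) t) (hg : ∀ t, HasDerivAt g (X (g t)) t)
    (t : ℝ) : dist (f t) (g t) ≤ dist (f 0) (g 0) * Real.exp (L * |t|) := by
  rcases le_or_gt 0 t with ht | ht
  · have key := dist_le_of_trajectories_ODE (v := fun _ x => X x) (K := L)
      (f := f) (g := g) (a := 0) (b := t) (δ := dist (f 0) (g 0))
      (fun _ => hL)
      (Continuous.continuousOn (continuous_iff_continuousAt.mpr
        fun s => (hf s).continuousAt))
      (fun s _ => (hf s).hasDerivWithinAt)
      (Continuous.continuousOn (continuous_iff_continuousAt.mpr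
        fun s => (hg s).continuousAt))
      (fun s _ => (hg s).hasDerivWithinAt) le_rfl
    have := key t (by constructor <;> [exact ht; exact le_rfl])
    simpa [abs_of_nonneg ht] using this
  · set f1 : ℝ → Esp n := fun s => f (-s) with hf1
    set g1 : ℝ → Esp n := fun s => g (-s) with hg1
    set Y : Esp n → Esp n := fun x => -X x with hY
    have hLY : LipschitzWith L Y := fun x y => by
      simpa [hY, edist_neg_neg] using hL x y
    have hf1' : ∀ s, HasDerivAt f1 (Y (f1 s)) s := by
      intro s
      have := (hf (-s)).scomp s (hasDerivAt_neg s)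
      simpa [hf1, hY, Function.comp_def] using this
    have hg1' : ∀ s, HasDerivAt g1 (Y (g1 s)) s := by
      intro s
      have := (hg (-s)).scomp s (hasDerivAt_neg s)
      simpa [hg1, hY, Function.comp_def] using this
    have key := dist_le_of_trajectories_ODE (v := fun _ x => Y x) (K := L)
      (f := f1) (g := g1) (a := 0) (b := -t) (δ := dist (f1 0) (g1 0))
      (fun _ => hLY)
      (Continuous.continuousOn (continuous_iff_continuousAt.mpr
        fun s => (hf1' s).continuousAt))
      (fun s _ => (hf1' s).hasDerivWithinAt)
      (Continuous.continuousOn (continuous_iff_continuousAt.mpr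
        fun s => (hg1' s).continuousAt))
      (fun s _ => (hg1' s).hasDerivWithinAt) le_rfl
    have := key (-t) (by constructor <;> [linarith; exact le_rfl])
    simpa [hf1, hg1, abs_of_neg ht] using this

lemma exists_cutoff_field {n : ℕ} (F : Esp n → ℝ) (hsm : ContDiff ℝ (⊤:ℕ∞) F)
    {K : Set (Esp n)} (hK : IsCompact K) :
    ∃ Y : Esp n → Esp n, ∃ L : ℝ≥0, ∃ M : ℝ,
      LipschitzWith L Y ∧ (∀ x ∈ K, Y x = hamVF F x) ∧ (∀ x, ‖Y x‖ ≤ M) := by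
  have hgrad : ContDiff ℝ (⊤:ℕ∞) (fun x => gradient F x) := by
    have h1 : ContDiff ℝ (⊤:ℕ∞) (fun x => fderiv ℝ F x) :=
      hsm.fderiv_right (by exact_mod_cast le_top)
    exact ((InnerProductSpace.toDual ℝ (Esp n)).symm.contDiff).comp h1
  have hXsm : ContDiff ℝ (⊤:ℕ∞) (fun x => hamVF F x) := by
    unfold hamVF
    exact hgrad.const_smul Complex.I
  obtain ⟨r, hr⟩ := hK.isBounded.subset_closedBall 0
  set ρ : ℝ := max r 0 with hρ
  have hKρ : K ⊆ closedBall 0 (ρ + 1) := hr.trans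
    (closedBall_subset_closedBall (by
      have := le_max_left r 0
      linarith))
  set χ : ContDiffBump (0 : Esp n) :=
    ⟨ρ + 1, ρ + 2, by positivity, by linarith⟩ with hχ
  set Y : Esp n → Esp n := fun x => χ x • hamVF F x with hY
  have hYsm : ContDiff ℝ (⊤:ℕ∞) Y := χ.contDiff.smul hXsm
  have hYsupp : HasCompactSupport Y := χ.hasCompactSupport.smul_right
  obtain ⟨L, hL⟩ := ContDiff.lipschitzWith_of_hasCompactSupport hYsupp hYsm
    (by simp)
  obtain ⟨M, hM⟩ := hYsupp.exists_bound_of_continuous (hYsm.continuous)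
  refine ⟨Y, L, M, hL, fun x hx => ?_, fun x => hM x⟩
  rw [hY]
  simp only
  rw [χ.one_of_mem_closedBall (hKρ hx), one_smul]

set_option maxHeartbeats 1600000 in
/-- **Proposition 5.5 of Ginzburg–Gürel** for regular level hypersurfaces in
standard `ℝ^{2n}`: if `S = F⁻¹(0)` is a regular level of a smooth proper
function `F`, with bounded nonempty sublevels `U_ε = {F < ε}` serving as a
thickening of `S`, and `S` has relative Lipschitz type, i.e.
`limsup_{ε → 0⁺} c_HZ(U_ε, Ū₀)/ε < ∞`, then `S` carries a closed
characteristic. -/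
theorem stmt_16 (n : ℕ) (hn : 1 ≤ n) (F : Esp n → ℝ)
    (hsm : ContDiff ℝ (⊤ : ℕ∞) F)
    (hproper : ∀ s : Set ℝ, IsCompact s → IsCompact (F ⁻¹' s))
    (ε₀ : ℝ) (hε₀ : 0 < ε₀)
    (hreg : ∀ c ∈ Icc (-ε₀) ε₀, ∀ x, F x = c → gradient F x ≠ 0)
    (hsub : ∀ ε ∈ Icc (-ε₀) ε₀, (F ⁻¹' Iio ε).Nonempty ∧
      Bornology.IsBounded (F ⁻¹' Iio ε))
    (hlip : Filter.limsup
      (fun ε : ℝ =>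
        relCap (F ⁻¹' Iio ε) (closure (F ⁻¹' Iio 0)) / ENNReal.ofReal ε)
      (𝓝[>] (0 : ℝ)) < ⊤) :
    ∃ γ T, IsPeriodicOrbit F γ T ∧ ∀ t, F (γ t) = 0 := by
  classical
  set Z := closure (F ⁻¹' Iio 0) with hZdef
  set lc : ℝ≥0∞ := Filter.limsup
      (fun ε : ℝ => relCap (F ⁻¹' Iio ε) Z / ENNReal.ofReal ε) (𝓝[>] (0 : ℝ)) with hlc
  have hlctop : lc ≠ ⊤ := hlip.ne
  set C : ℝ≥0∞ := lc + 1 with hC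
  have hCne : C ≠ ⊤ := by
    rw [hC]
    exact ENNReal.add_ne_top.mpr ⟨hlctop, ENNReal.one_ne_top⟩
  have hlt : lc < C := ENNReal.lt_add_right hlctop one_ne_zero
  have hev : ∀ᶠ ε in 𝓝[>] (0:ℝ),
      relCap (F ⁻¹' Iio ε) Z / ENNReal.ofReal ε < C :=
    Filter.eventually_lt_of_limsup_lt hlt
  obtain ⟨u, hu0, huδ⟩ := mem_nhdsGT_iff_exists_Ioo_subset.mp hev
  set δ : ℝ := u with hδdef
  have hδpos : 0 < δ := hu0
  have hδ : ∀ ε : ℝ, 0 < ε → ε < δ → relCap (F ⁻¹' Iio ε) Z / ENNReal.ofReal ε < C :=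
    fun ε h1 h2 => huδ ⟨h1, h2⟩
  set R : ℝ := C.toReal with hRdef
  have hR1 : (1:ℝ) ≤ R := by
    rw [hRdef, show (1:ℝ) = (1:ℝ≥0∞).toReal by simp]
    exact ENNReal.toReal_mono hCne (by rw [hC]; exact le_add_self)
  have hR0 : (0:ℝ) ≤ R := by linarith
  have hcap : ∀ ε : ℝ, 0 < ε → ε < δ →
      relCap (F ⁻¹' Iio ε) Z < ENNReal.ofReal (R * ε) := by
    intro ε h1 h2
    have h3 := hδ ε h1 h2
    rw [ENNReal.div_lt_iff (Or.inl (by simpa using h1)) (Or.inl ENNReal.ofReal_ne_top)] at h3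
    rw [ENNReal.ofReal_mul hR0, hRdef, ENNReal.ofReal_toReal hCne]
    exact h3
  -- the sequence of thickness parameters
  set e : ℕ → ℝ := fun k => min δ ε₀ / (k + 2) with hedef
  have hminpos : 0 < min δ ε₀ := lt_min hδpos hε₀
  have hepos : ∀ k, 0 < e k := fun k => by
    rw [hedef]; positivity
  have helt : ∀ k, e k < min δ ε₀ := fun k => by
    rw [hedef]
    apply div_lt_self hminpos
    push_cast; linarith
  have heδ : ∀ k, e k < δ := fun k => lt_of_lt_of_le (helt k) (min_le_left _ _)
  have heε₀ : ∀ k, e k ≤ ε₀ := fun k => le_of_lt (lt_of_lt_of_le (helt k) (min_le_right _ _))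
  have he0 : Filter.Tendsto e Filter.atTop (𝓝 0) := by
    rw [hedef]
    apply Filter.Tendsto.div_atTop tendsto_const_nhds
    exact Filter.tendsto_atTop_add_const_right _ 2 tendsto_natCast_atTop_atTop
  have hne0 : (F ⁻¹' Iio 0).Nonempty := (hsub 0 ⟨by linarith, le_of_lt hε₀⟩).1
  obtain ⟨B, hB0, hBb⟩ := exists_st_bound
  set P : ℝ := 3*R*(B+1) with hPdef
  have hPpos : 0 < P := by rw [hPdef]; positivity
  have main : ∀ k : ℕ, ∃ σ : ℝ → Esp n, ∃ T c : ℝ,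
      (∀ t, HasDerivAt σ (hamVF F (σ t)) t) ∧ (∀ t, σ (t + T) = σ t) ∧
      (∀ t, F (σ t) = c) ∧ P < T ∧ T ≤ 2*P ∧ 0 < c ∧ c ≤ e k := by
    intro k
    exact exists_orbit_level F hsm B R (e k) hB0 hBb hR1 (hepos k) hne0
      (hsub (e k) ⟨by linarith [hepos k], heε₀ k⟩).2 (hcap (e k) (hepos k) (heδ k))
  choose σ T cs hode hper hlev hTgt hTle hcpos hcle using main
  -- compact region
  set K : Set (Esp n) := F ⁻¹' (Icc (-ε₀) ε₀) with hKdef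
  have hKcomp : IsCompact K := hproper _ isCompact_Icc
  have hmemK : ∀ k t, σ k t ∈ K := by
    intro k t
    rw [hKdef]
    simp only [mem_preimage, mem_Icc, hlev k t]
    exact ⟨by linarith [hcpos k], le_trans (hcle k) (heε₀ k)⟩
  obtain ⟨Y, L, M, hLip, hYeq, hM⟩ := exists_cutoff_field F hsm hKcomp
  have hodeY : ∀ k t, HasDerivAt (σ k) (Y (σ k t)) t := fun k t => by
    rw [hYeq _ (hmemK k t)]; exact hode k t
  have hMn : (0:ℝ) ≤ M := le_trans (norm_nonneg _) (hM (σ 0 0))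
  have hσlip : ∀ k a b, dist (σ k a) (σ k b) ≤ M * |a - b| := fun k =>
    sol_lipschitz (hodeY k) (fun t => hM _)
  -- extraction of a convergent subsequence of initial data
  have hKT : IsCompact (K ×ˢ Icc P (2*P)) := hKcomp.prod isCompact_Icc
  have hmem2 : ∀ k, ((σ k 0, T k) : Esp n × ℝ) ∈ K ×ˢ Icc P (2*P) := fun k =>
    ⟨hmemK k 0, le_of_lt (hTgt k), hTle k⟩
  obtain ⟨⟨pL, TL⟩, hmemL, φ, hφmono, hφtend⟩ := hKT.tendsto_subseq hmem2
  rw [nhds_prod_eq, Filter.tendsto_prod_iff'] at hφtend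
  obtain ⟨hptend, hTtend⟩ := hφtend
  simp only [Function.comp] at hptend hTtend
  set q : ℕ → Esp n := fun j => σ (φ j) 0 with hqdef
  have hgron : ∀ i j : ℕ, ∀ t : ℝ,
      dist (σ (φ i) t) (σ (φ j) t) ≤ dist (q i) (q j) * Real.exp (L * |t|) :=
    fun i j t => gronwall_dist hLip (hodeY (φ i)) (hodeY (φ j)) t
  -- pointwise limit
  have hcauchy : ∀ t : ℝ, CauchySeq (fun j => σ (φ j) t) := by
    intro t
    rw [Metric.cauchySeq_iff]
    intro ε hε
    have hqc : CauchySeq q := hptend.cauchySeq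
    rw [Metric.cauchySeq_iff] at hqc
    set E : ℝ := Real.exp (L * |t|) with hE
    have hEpos : 0 < E := Real.exp_pos _
    obtain ⟨N, hN⟩ := hqc (ε / E) (by positivity)
    refine ⟨N, fun i hi j hj => ?_⟩
    calc dist (σ (φ i) t) (σ (φ j) t) ≤ dist (q i) (q j) * E := hgron i j t
      _ < (ε / E) * E := by
          apply mul_lt_mul_of_pos_right (hN i hi j hj) hEpos
      _ = ε := by field_simp
  have hlim : ∀ t : ℝ, ∃ y : Esp n, Filter.Tendsto (fun j => σ (φ j) t) Filter.atTop (𝓝 y) :=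
    fun t => cauchySeq_tendsto_of_complete (hcauchy t)
  choose γ hγ using hlim
  -- uniform-type estimate for the limit
  have hdistlim : ∀ j t, dist (σ (φ j) t) (γ t) ≤ dist (q j) pL * Real.exp (L * |t|) := by
    intro j t
    have h1 : Filter.Tendsto (fun i => dist (σ (φ j) t) (σ (φ i) t)) Filter.atTop
        (𝓝 (dist (σ (φ j) t) (γ t))) := tendsto_const_nhds.dist (hγ t)
    have h2 : Filter.Tendsto (fun i => dist (q j) (q i) * Real.exp (L * |t|)) Filter.atTop
        (𝓝 (dist (q j) pL * Real.exp (L * |t|))) :=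
      (tendsto_const_nhds.dist hptend).mul tendsto_const_nhds
    exact le_of_tendsto_of_tendsto' h1 h2 (fun i => hgron j i t)
  have hγlip : ∀ a b, dist (γ a) (γ b) ≤ M * |a - b| := by
    intro a b
    have h1 : Filter.Tendsto (fun j => dist (σ (φ j) a) (σ (φ j) b)) Filter.atTop
        (𝓝 (dist (γ a) (γ b))) := (hγ a).dist (hγ b)
    exact le_of_tendsto h1 (Filter.Eventually.of_forall fun j => hσlip (φ j) a b)
  have hγcont : Continuous γ := by
    apply LipschitzWith.continuous (K := ⟨M, hMn⟩)
    apply LipschitzWith.of_dist_le_mul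
    intro a b
    rw [Real.dist_eq]; exact hγlip a b
  -- integral equation and ODE for the limit
  have hσcont : ∀ k, Continuous (σ k) := fun k =>
    continuous_iff_continuousAt.mpr (fun t => (hodeY k t).continuousAt)
  have hint : ∀ j t, σ (φ j) t = q j + ∫ s in (0:ℝ)..t, Y (σ (φ j) s) := by
    intro j t
    have hYc : Continuous (fun s => Y (σ (φ j) s)) := hLip.continuous.comp (hσcont (φ j))
    have := intervalIntegral.integral_eq_sub_of_hasDerivAt
      (f := σ (φ j)) (f' := fun s => Y (σ (φ j) s)) (a := 0) (b := t)
      (fun s _ => hodeY (φ j) s) (hYc.intervalIntegrable 0 t)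
    rw [this, hqdef]
    abel
  have hYγtend : ∀ t : ℝ, Filter.Tendsto (fun j => ∫ s in (0:ℝ)..t, Y (σ (φ j) s))
      Filter.atTop (𝓝 (∫ s in (0:ℝ)..t, Y (γ s))) := by
    intro t
    rw [tendsto_iff_dist_tendsto_zero]
    have hbnd : ∀ j, dist (∫ s in (0:ℝ)..t, Y (σ (φ j) s)) (∫ s in (0:ℝ)..t, Y (γ s))
        ≤ (L * (dist (q j) pL * Real.exp (L * |t|))) * |t| := by
      intro j
      have hYc : Continuous (fun s => Y (σ (φ j) s)) := hLip.continuous.comp (hσcont (φ j))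
      have hYγc : Continuous (fun s => Y (γ s)) := hLip.continuous.comp hγcont
      rw [dist_eq_norm, ← intervalIntegral.integral_sub
        (hYc.intervalIntegrable 0 t) (hYγc.intervalIntegrable 0 t)]
      have := intervalIntegral.norm_integral_le_of_norm_le_const
        (f := fun s => Y (σ (φ j) s) - Y (γ s)) (a := 0) (b := t)
        (C := L * (dist (q j) pL * Real.exp (L * |t|))) ?_
      · simpa using this
      · intro s hs
        have hsle : |s| ≤ |t| := by
          rw [uIoc_comm, mem_uIoc] at hs
          rcases hs with ⟨h1, h2⟩ | ⟨h1, h2⟩ <;> rw [abs_le] <;>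
            constructor <;> simp [abs_le] at * <;> linarith [le_abs_self t, neg_abs_le t]
        calc ‖Y (σ (φ j) s) - Y (γ s)‖ ≤ L * dist (σ (φ j) s) (γ s) := by
              rw [← dist_eq_norm]; exact hLip.dist_le_mul _ _
          _ ≤ L * (dist (q j) pL * Real.exp (L * |s|)) := by
              apply mul_le_mul_of_nonneg_left (hdistlim j s) (NNReal.coe_nonneg L)
          _ ≤ L * (dist (q j) pL * Real.exp (L * |t|)) := by
              apply mul_le_mul_of_nonneg_left _ (NNReal.coe_nonneg L)
              apply mul_le_mul_of_nonneg_left _ dist_nonneg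
              exact Real.exp_le_exp.mpr (mul_le_mul_of_nonneg_left hsle (NNReal.coe_nonneg L))
    have hz : Filter.Tendsto (fun j => (L * (dist (q j) pL * Real.exp (L * |t|))) * |t|)
        Filter.atTop (𝓝 0) := by
      have h1 : Filter.Tendsto (fun j => dist (q j) pL) Filter.atTop (𝓝 0) :=
        tendsto_iff_dist_tendsto_zero.mp hptend
      have : Filter.Tendsto (fun j => (L * (dist (q j) pL * Real.exp (L * |t|))) * |t|)
          Filter.atTop (𝓝 ((L * (0 * Real.exp (L * |t|))) * |t|)) := by
        apply Filter.Tendsto.mul_const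
        apply Filter.Tendsto.const_mul
        exact h1.mul_const _
      simpa using this
    exact squeeze_zero (fun j => dist_nonneg) hbnd hz
  have hγint : ∀ t : ℝ, γ t = pL + ∫ s in (0:ℝ)..t, Y (γ s) := by
    intro t
    refine tendsto_nhds_unique (hγ t) ?_
    have h2 := hptend.add (hYγtend t)
    exact h2.congr (fun j => (hint j t).symm)
  have hγode : ∀ t, HasDerivAt γ (Y (γ t)) t := by
    intro t
    have hYγc : Continuous (fun s => Y (γ s)) := hLip.continuous.comp hγcont
    have h1 : HasDerivAt (fun u => ∫ s in (0:ℝ)..u, Y (γ s)) (Y (γ t)) t :=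
      intervalIntegral.integral_hasDerivAt_right (hYγc.intervalIntegrable 0 t)
        (hYγc.stronglyMeasurable.stronglyMeasurableAtFilter) hYγc.continuousAt
    have h2 : HasDerivAt (fun u => pL + ∫ s in (0:ℝ)..u, Y (γ s)) (Y (γ t)) t :=
      h1.const_add pL
    exact h2.congr_of_eventuallyEq (Filter.Eventually.of_forall hγint)
  -- level set of the limit
  have hcs0 : Filter.Tendsto (fun j => cs (φ j)) Filter.atTop (𝓝 0) := by
    apply squeeze_zero (fun j => le_of_lt (hcpos (φ j))) (fun j => hcle (φ j))
    exact he0.comp hφmono.tendsto_atTop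
  have hlevL : ∀ t, F (γ t) = 0 := by
    intro t
    have h1 : Filter.Tendsto (fun j => F (σ (φ j) t)) Filter.atTop (𝓝 (F (γ t))) :=
      (hsm.continuous.continuousAt.tendsto).comp (hγ t)
    have h2 : (fun j => F (σ (φ j) t)) = fun j => cs (φ j) := funext fun j => hlev (φ j) t
    rw [h2] at h1
    exact tendsto_nhds_unique h1 hcs0
  have hmemKL : ∀ t, γ t ∈ K := by
    intro t
    rw [hKdef]
    simp only [mem_preimage, mem_Icc, hlevL t]
    constructor <;> linarith
  have hodeF : ∀ t, HasDerivAt γ (hamVF F (γ t)) t := by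
    intro t
    have := hγode t
    rwa [hYeq _ (hmemKL t)] at this
  -- periodicity
  have hTLmem : TL ∈ Icc P (2*P) := hmemL.2
  have hTLpos : 0 < TL := lt_of_lt_of_le hPpos hTLmem.1
  have hperL : ∀ t, γ (t + TL) = γ t := by
    intro t
    have h1 : Filter.Tendsto (fun j => σ (φ j) (t + T (φ j))) Filter.atTop (𝓝 (γ (t + TL))) := by
      rw [tendsto_iff_dist_tendsto_zero]
      have hbnd : ∀ j, dist (σ (φ j) (t + T (φ j))) (γ (t + TL))
          ≤ M * |T (φ j) - TL| + dist (σ (φ j) (t + TL)) (γ (t + TL)) := by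
        intro j
        calc dist (σ (φ j) (t + T (φ j))) (γ (t + TL))
            ≤ dist (σ (φ j) (t + T (φ j))) (σ (φ j) (t + TL))
              + dist (σ (φ j) (t + TL)) (γ (t + TL)) := dist_triangle _ _ _
          _ ≤ M * |T (φ j) - TL| + dist (σ (φ j) (t + TL)) (γ (t + TL)) := by
              have := hσlip (φ j) (t + T (φ j)) (t + TL)
              have heq : |t + T (φ j) - (t + TL)| = |T (φ j) - TL| := by ring_nf
              rw [heq] at this
              linarith
      have hz : Filter.Tendsto
          (fun j => M * |T (φ j) - TL| + dist (σ (φ j) (t + TL)) (γ (t + TL)))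
          Filter.atTop (𝓝 0) := by
        have h2 : Filter.Tendsto (fun j => |T (φ j) - TL|) Filter.atTop (𝓝 0) := by
          have := hTtend.sub (tendsto_const_nhds (x := TL))
          rw [show (0:ℝ) = |TL - TL| by simp]
          exact ((continuous_abs.tendsto _).comp (by simpa using this)).congr (fun j => rfl)
        have h3 : Filter.Tendsto (fun j => dist (σ (φ j) (t + TL)) (γ (t + TL)))
            Filter.atTop (𝓝 0) := tendsto_iff_dist_tendsto_zero.mp (hγ (t + TL))
        have := (h2.const_mul M).add h3
        simpa using this
      exact squeeze_zero (fun j => dist_nonneg) hbnd hz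
    have h2 : Filter.Tendsto (fun j => σ (φ j) (t + T (φ j))) Filter.atTop (𝓝 (γ t)) := by
      have : (fun j => σ (φ j) (t + T (φ j))) = fun j => σ (φ j) t :=
        funext fun j => hper (φ j) t
      rw [this]
      exact hγ t
    exact tendsto_nhds_unique h1 h2
  -- nonconstancy
  have hnc : ∃ t₀ t₁, γ t₀ ≠ γ t₁ := by
    by_contra hcon
    push_neg at hcon
    have hconst : γ = fun _ => γ 0 := funext fun t => hcon t 0
    have h1 : HasDerivAt γ 0 0 := by
      rw [hconst]
      exact hasDerivAt_const 0 (γ 0)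
    have h2 : hamVF F (γ 0) = 0 := by
      have := hodeF 0
      exact (h1.unique this).symm
    have h3 : gradient F (γ 0) = 0 := by
      rw [hamVF] at h2
      rcases smul_eq_zero.mp h2 with h | h
      · exact absurd h Complex.I_ne_zero
      · exact h
    exact hreg 0 ⟨by linarith, by linarith⟩ (γ 0) (hlevL 0) h3
  exact ⟨γ, TL, ⟨hTLpos, hodeF, hperL, hnc⟩, hlevL⟩
end
end

section
/- For every n ≥ 1 and all R > 0 and c > 0, there exists a smooth nonnegative function H : ℝ^{2n} → ℝ whose support is a compact subset of the open ball B_R of radius R centered at the origin, with H(0) = max H = c, such that every nonconstant 1-periodic orbit γ of the Hamiltonian flow of H (every nonconstant solution of γ'(t) = J∇H(γ(t)) with γ(t+1) = γ(t)) has action A_H(γ) < c. In particular, the conclusion that H has a nonconstant 1-periodic orbit of action greater than max H fails if H is merely required to attain its maximum at the origin rather than being constant on a neighborhood of it. -/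
open scoped RealInnerProductSpace ENNReal NNReal Topology
open Metric Set

noncomputable section

variable {n : ℕ}

/-! ### Auxiliary material for Example 5.4 -/

namespace GGEx

open Real Polynomial

/-- The derivative of `expNegInvGlue`. -/
def D (y : ℝ) : ℝ := (y⁻¹) ^ 2 * expNegInvGlue y

lemma hasDerivAt_E (y : ℝ) : HasDerivAt expNegInvGlue (D y) y := by
  have h := expNegInvGlue.hasDerivAt_polynomial_eval_inv_mul (1 : ℝ[X]) y
  simpa [D] using h

lemma continuous_D : Continuous D := by
  have h := expNegInvGlue.continuous_polynomial_eval_inv_mul ((X : ℝ[X]) ^ 2)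
  show Continuous fun y : ℝ => (y⁻¹) ^ 2 * expNegInvGlue y
  simpa [inv_pow] using h

lemma E_mono : Monotone expNegInvGlue := by
  intro y z hyz
  rcases le_or_gt y 0 with hy | hy
  · rw [expNegInvGlue.zero_of_nonpos hy]; exact expNegInvGlue.nonneg z
  · have hz : 0 < z := lt_of_lt_of_le hy hyz
    simp only [expNegInvGlue, not_le.2 hy, not_le.2 hz, if_false]
    exact exp_le_exp.2 (by
      have := inv_anti₀ hy hyz
      linarith)

/-- `ψ(x) = E(x) + (r - x)·E'(x)`, the function controlling the action bound. -/
def psi (r x : ℝ) : ℝ := expNegInvGlue x + (r - x) * D x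

lemma continuous_psi (r : ℝ) : Continuous (psi r) :=
  ((expNegInvGlue.contDiff (n := 0)).continuous).add
    ((continuous_const.sub continuous_id).mul continuous_D)

lemma E_pos_eq {x : ℝ} (hx : 0 < x) : expNegInvGlue x = Real.exp (-x⁻¹) := by
  simp [expNegInvGlue, not_le.2 hx]

lemma hasDerivAt_psi (r : ℝ) {x : ℝ} (hx : 0 < x) :
    HasDerivAt (psi r) (Real.exp (-x⁻¹) * ((r - x) * (1 - 2 * x) / x ^ 4)) x := by
  have hx' : x ≠ 0 := hx.ne'
  have h1 : HasDerivAt (fun y : ℝ => -y⁻¹) ((x ^ 2)⁻¹) x := by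
    exact ((hasDerivAt_inv hx').neg).congr_deriv (by ring)
  have hexp : HasDerivAt (fun y : ℝ => Real.exp (-y⁻¹)) (Real.exp (-x⁻¹) * (x ^ 2)⁻¹) x := h1.exp
  have hpow : HasDerivAt (fun y : ℝ => (y⁻¹) ^ 2) ((2 : ℕ) * (x⁻¹) ^ 1 * -(x ^ 2)⁻¹) x :=
    (hasDerivAt_inv hx').pow 2
  have hrs : HasDerivAt (fun y : ℝ => r - y) (-1) x := (hasDerivAt_id x).const_sub r
  have hmul := hrs.mul hpow
  have hg := hmul.const_add (1 : ℝ)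
  have hfull := hexp.mul hg
  have heq : psi r =ᶠ[nhds x] fun y => Real.exp (-y⁻¹) * (1 + (r - y) * (y⁻¹) ^ 2) := by
    filter_upwards [Ioi_mem_nhds hx] with y hy
    have hy0 : (0:ℝ) < y := hy
    simp only [psi, D, E_pos_eq hy0]
    ring
  have hψ := hfull.congr_of_eventuallyEq heq
  refine hψ.congr_deriv ?_
  simp only [Pi.mul_apply]
  field_simp
  ring

lemma strictMonoOn_psi {r : ℝ} (hr0 : 0 < r) (hr : r < 1/2) :
    StrictMonoOn (psi r) (Ioc 0 r) := by
  apply strictMonoOn_of_deriv_pos (convex_Ioc 0 r) (continuous_psi r).continuousOn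
  intro x hx
  rw [interior_Ioc] at hx
  rw [(hasDerivAt_psi r hx.1).deriv]
  have h1 : 0 < r - x := by linarith [hx.2]
  have h2 : 0 < 1 - 2 * x := by linarith [hx.2]
  have h3 : 0 < x := hx.1
  positivity

/-- Key inequality: `E(r-ρ) + ρ·E'(r-ρ) < E(r)` for `ρ > 0` (when `0 < r < 1/2`). -/
lemma key {r : ℝ} (hr0 : 0 < r) (hr : r < 1/2) {ρ : ℝ} (hρ : 0 < ρ) :
    expNegInvGlue (r - ρ) + ρ * D (r - ρ) < expNegInvGlue r := by
  rcases le_or_gt r ρ with h | h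
  · have h1 : expNegInvGlue (r - ρ) = 0 := expNegInvGlue.zero_of_nonpos (by linarith)
    have h2 : D (r - ρ) = 0 := by simp [D, h1]
    simp only [h1, h2, mul_zero, add_zero]
    exact expNegInvGlue.pos_of_pos hr0
  · have hmem : (r - ρ) ∈ Ioc (0:ℝ) r := ⟨by linarith, by linarith⟩
    have hrr : r ∈ Ioc (0:ℝ) r := ⟨hr0, le_rfl⟩
    have hlt := strictMonoOn_psi hr0 hr hmem hrr (by linarith)
    have hpsir : psi r r = expNegInvGlue r := by simp [psi]
    have hpsix : psi r (r - ρ) = expNegInvGlue (r - ρ) + ρ * D (r - ρ) := by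
      simp [psi, sub_sub_cancel]
    rw [hpsir, hpsix] at hlt
    exact hlt

/-- The gradient of `x ↦ a·E(r - ‖x‖²)`. -/
lemma hasGradientAt_H {n : ℕ} (a r : ℝ) (x : Esp n) :
    HasGradientAt (fun y : Esp n => a * expNegInvGlue (r - ‖y‖ ^ 2))
      ((-2 * (a * D (r - ‖x‖ ^ 2))) • x) x := by
  have hq : HasFDerivAt (fun y : Esp n => ‖y‖ ^ 2) (2 • (innerSL ℝ x)) x :=
    (hasStrictFDerivAt_norm_sq x).hasFDerivAt
  have hrs : HasDerivAt (fun ρ : ℝ => r - ρ) (-1) (‖x‖ ^ 2) := (hasDerivAt_id _).const_sub r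
  have hE := (hasDerivAt_E (r - ‖x‖ ^ 2)).comp (‖x‖ ^ 2) hrs
  have hφ := hE.const_mul a
  have hH := hφ.comp_hasFDerivAt x hq
  rw [hasGradientAt_iff_hasFDerivAt]
  refine hH.congr_fderiv ?_
  ext y
  simp only [InnerProductSpace.toDual_apply_apply, real_inner_smul_left,
    ContinuousLinearMap.smul_apply, ContinuousLinearMap.coe_smul', Pi.smul_apply,
    innerSL_apply_apply, smul_eq_mul, nsmul_eq_mul, Nat.cast_ofNat]
  ring

end GGEx

/-- **Example 5.4 (`exam:actions`) of Ginzburg–Gürel for `M = {0} ⊂ ℝ^{2n}`**: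
for any `R > 0` and `c > 0` there is a smooth nonnegative function `H` with
compact support in the ball `B_R`, attaining its maximum `c` at the origin,
such that every nonconstant `1`-periodic orbit of its Hamiltonian flow has
action `< c`. Hence the conclusion of Theorem 5.1 fails when `H` is merely
required to attain its maximum at the origin rather than being constant on a
neighborhood of it. -/
theorem stmt_19 (n : ℕ) (hn : 1 ≤ n) (R c : ℝ) (hR : 0 < R) (hc : 0 < c) :
    ∃ H : Esp n → ℝ, ContDiff ℝ (⊤ : ℕ∞) H ∧ (∀ x, 0 ≤ H x) ∧
      IsCompact (tsupport H) ∧ tsupport H ⊆ ball (0 : Esp n) R ∧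
      H 0 = c ∧ (∀ x, H x ≤ c) ∧
      ∀ γ : ℝ → Esp n, (∀ t, HasDerivAt γ (hamVF H (γ t)) t) →
        (∀ t, γ (t + 1) = γ t) → (∃ t₀ t₁, γ t₀ ≠ γ t₁) →
        action (fun _ => H) γ < c := by
  classical
  set r : ℝ := min (R ^ 2) 1 / 4 with hrdef
  have hrmin : 0 < min (R ^ 2) 1 := lt_min (by positivity) one_pos
  have hr0 : 0 < r := by positivity
  have hrhalf : r < 1 / 2 := by
    have : min (R ^ 2) 1 ≤ 1 := min_le_right _ _
    rw [hrdef]; linarith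
  have hrR2 : r < R ^ 2 := by
    have h1 : min (R ^ 2) 1 ≤ R ^ 2 := min_le_left _ _
    rw [hrdef]; nlinarith
  have hEr : 0 < expNegInvGlue r := expNegInvGlue.pos_of_pos hr0
  set a : ℝ := c / expNegInvGlue r with hadef
  have ha : 0 < a := div_pos hc hEr
  have haEr : a * expNegInvGlue r = c := div_mul_cancel₀ c hEr.ne'
  set H : Esp n → ℝ := fun x => a * expNegInvGlue (r - ‖x‖ ^ 2) with hHdef
  have hsmooth : ContDiff ℝ (⊤ : ℕ∞) H :=
    contDiff_const.mul (expNegInvGlue.contDiff.comp (contDiff_const.sub (contDiff_norm_sq ℝ)))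
  have hnonneg : ∀ x, 0 ≤ H x := fun x => mul_nonneg ha.le (expNegInvGlue.nonneg _)
  have hH0 : H 0 = c := by
    simpa [hHdef] using haEr
  have hHle : ∀ x, H x ≤ c := by
    intro x
    have h1 : expNegInvGlue (r - ‖x‖ ^ 2) ≤ expNegInvGlue r :=
      GGEx.E_mono (by nlinarith [sq_nonneg ‖x‖])
    calc H x ≤ a * expNegInvGlue r := mul_le_mul_of_nonneg_left h1 ha.le
      _ = c := haEr
  have hsqrt : Real.sqrt r < R := by
    rw [show R = Real.sqrt (R ^ 2) by rw [Real.sqrt_sq hR.le]]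
    exact Real.sqrt_lt_sqrt hr0.le hrR2
  have hsupp : tsupport H ⊆ closedBall (0 : Esp n) (Real.sqrt r) := by
    apply closure_minimal _ isClosed_closedBall
    intro x hx
    have hne : expNegInvGlue (r - ‖x‖ ^ 2) ≠ 0 := by
      intro h; exact hx (by simp [hHdef, h])
    have h2 : 0 < r - ‖x‖ ^ 2 := by
      by_contra hle
      exact hne (expNegInvGlue.zero_of_nonpos (by linarith))
    rw [mem_closedBall_zero_iff]
    have h3 : ‖x‖ ^ 2 ≤ r := by linarith
    rw [← Real.sqrt_sq (norm_nonneg x)]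
    exact Real.sqrt_le_sqrt h3
  refine ⟨H, hsmooth, hnonneg,
    (isCompact_closedBall (0 : Esp n) (Real.sqrt r)).of_isClosed_subset (isClosed_tsupport H) hsupp,
    hsupp.trans (closedBall_subset_ball hsqrt), hH0, hHle, ?_⟩
  intro γ hγ hper hnc
  have hγcont : Continuous γ := by
    rw [continuous_iff_continuousAt]; exact fun t => (hγ t).continuousAt
  set ρ : ℝ → ℝ := fun t => ‖γ t‖ ^ 2 with hρdef
  have hρcont : Continuous ρ := hγcont.norm.pow 2
  have hgrad : ∀ x : Esp n, gradient H x = (-2 * (a * GGEx.D (r - ‖x‖ ^ 2))) • x :=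
    fun x => (GGEx.hasGradientAt_H a r x).gradient
  have hinner : ∀ t, (⟪(Complex.I • γ t : Esp n), deriv γ t⟫)
      = (-2 : ℝ) * (a * (ρ t * GGEx.D (r - ρ t))) := by
    intro t
    rw [(hγ t).deriv]
    simp only [hamVF]
    rw [hgrad, smul_comm, real_inner_smul_right, real_inner_self_eq_norm_sq,
      norm_smul, Complex.norm_I, one_mul]
    simp only [hρdef]
    ring
  have hDcont : Continuous fun t => GGEx.D (r - ρ t) :=
    GGEx.continuous_D.comp (continuous_const.sub hρcont)
  have hu_cont : Continuous fun t => a * (ρ t * GGEx.D (r - ρ t)) :=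
    continuous_const.mul (hρcont.mul hDcont)
  have hv_cont : Continuous fun t => a * expNegInvGlue (r - ρ t) :=
    continuous_const.mul
      ((expNegInvGlue.contDiff (n := 0)).continuous.comp (continuous_const.sub hρcont))
  set F : ℝ → ℝ := fun t => a * (expNegInvGlue (r - ρ t) + ρ t * GGEx.D (r - ρ t)) with hFdef
  have hFcont : Continuous F :=
    continuous_const.mul
      (((expNegInvGlue.contDiff (n := 0)).continuous.comp (continuous_const.sub hρcont)).add
        (hρcont.mul hDcont))
  have hact : action (fun _ => H) γ = ∫ t in (0:ℝ)..1, F t := by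
    rw [action]
    have h1 : (∫ t in (0:ℝ)..1, (⟪(Complex.I • γ t : Esp n), deriv γ t⟫))
        = ∫ t in (0:ℝ)..1, (-2 : ℝ) * (a * (ρ t * GGEx.D (r - ρ t))) :=
      intervalIntegral.integral_congr fun t _ => hinner t
    rw [h1, intervalIntegral.integral_const_mul]
    have h3 : -(1 / 2 : ℝ) * ((-2) * ∫ t in (0:ℝ)..1, a * (ρ t * GGEx.D (r - ρ t)))
        = ∫ t in (0:ℝ)..1, a * (ρ t * GGEx.D (r - ρ t)) := by ring
    rw [h3, ← intervalIntegral.integral_add (hu_cont.intervalIntegrable _ _)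
      (hv_cont.intervalIntegrable _ _)]
    exact intervalIntegral.integral_congr fun t _ => by
      simp only [hFdef, hHdef, hρdef]; ring
  have hρnn : ∀ t, 0 ≤ ρ t := fun t => sq_nonneg _
  have hFle : ∀ t, F t ≤ c := by
    intro t
    rcases (hρnn t).eq_or_lt with h | h
    · simp only [hFdef, ← h, zero_mul, add_zero, sub_zero]
      exact haEr.le
    · have hlt := mul_lt_mul_of_pos_left (GGEx.key hr0 hrhalf h) ha
      rw [haEr] at hlt
      exact hlt.le
  have hFlt : ∀ t, γ t ≠ 0 → F t < c := by
    intro t ht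
    have hnp : 0 < ‖γ t‖ := norm_pos_iff.mpr ht
    have h : 0 < ρ t := by simp only [hρdef]; positivity
    have hlt := mul_lt_mul_of_pos_left (GGEx.key hr0 hrhalf h) ha
    rwa [haEr] at hlt
  have hex : ∃ t₀ ∈ Icc (0:ℝ) 1, γ t₀ ≠ 0 := by
    by_contra hcon
    push_neg at hcon
    have hp : Function.Periodic γ 1 := hper
    have hall : ∀ t, γ t = 0 := by
      intro t
      have h1 : γ t = γ (t - (⌊t⌋ : ℝ) * 1) := (hp.sub_int_mul_eq ⌊t⌋).symm
      rw [mul_one] at h1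
      rw [h1]
      exact hcon _ ⟨sub_nonneg.mpr (Int.floor_le t), by linarith [Int.lt_floor_add_one t]⟩
    obtain ⟨t₀, t₁, hne⟩ := hnc
    exact hne (by rw [hall t₀, hall t₁])
  obtain ⟨t₀, ht₀, hne⟩ := hex
  have hlt := intervalIntegral.integral_lt_integral_of_continuousOn_of_le_of_exists_lt
    (by norm_num : (0:ℝ) < 1) hFcont.continuousOn continuousOn_const
    (fun x _ => hFle x) ⟨t₀, ht₀, hFlt t₀ hne⟩
  rw [hact]
  calc (∫ t in (0:ℝ)..1, F t) < ∫ _t in (0:ℝ)..1, c := hlt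
    _ = c := by simp
end
end
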